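/- arXiv:1411.5510 — 6 statements merged into one kernel-verified Lean document; each statement's English description precedes it below -/
import Mathlib

section
/- Fix a,b > 0 and define E(W_n) = n·a·Γ(a+b)Γ(b+n-1)/(Γ(b)Γ(a+b+n) − Γ(a+b)Γ(b+n)). Then E(W_n) → 0 as n → ∞. -/
open Real Filter

/-- Probability that the n-th draw from a GDP(a,b,G₀) forms a new cluster. -/
noncomputable def gdpNewClusterProb (a b : ℝ) (n : ℕ) : ℝ :=
  (n : ℝ) * a * Gamma (a + b) * Gamma (b + n - 1) /
    (Gamma b * Gamma (a + b + n) - Gamma (a + b) * Gamma (b + n))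

open Finset Nat

lemma Gamma_add_nat_eq {x : ℝ} (hx : 0 < x) (n : ℕ) :
    Gamma (x + n) = Gamma x * ∏ j ∈ Finset.range n, (x + j) := by
  induction n with
  | zero => simp
  | succ n ih =>
    have h1 : x + (n + 1 : ℕ) = (x + n) + 1 := by push_cast; ring
    have h2 : x + (n : ℝ) ≠ 0 := by positivity
    rw [h1, Real.Gamma_add_one h2, ih, Finset.prod_range_succ]
    ring

lemma gammaSeq_pos {x : ℝ} (hx : 0 < x) {n : ℕ} (hn : n ≠ 0) : 0 < Real.GammaSeq x n := by
  unfold Real.GammaSeq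
  have h1 : (0:ℝ) < (n:ℝ) ^ x := Real.rpow_pos_of_pos (by exact_mod_cast Nat.pos_of_ne_zero hn) x
  have h2 : (0:ℝ) < ∏ j ∈ Finset.range (n+1), (x + j) :=
    Finset.prod_pos fun j _ => by positivity
  positivity

lemma Gamma_add_nat_succ {x : ℝ} (hx : 0 < x) {n : ℕ} (hn : n ≠ 0) :
    Gamma (x + (n + 1 : ℕ)) = Gamma x * ((n:ℝ) ^ x * n ! / Real.GammaSeq x n) := by
  rw [Gamma_add_nat_eq hx]
  congr 1
  have hp : (0:ℝ) < ∏ j ∈ Finset.range (n+1), (x + j) :=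
    Finset.prod_pos fun j _ => by positivity
  have hnp : (0:ℝ) < (n:ℝ) := by exact_mod_cast Nat.pos_of_ne_zero hn
  have hA : (0:ℝ) < (n:ℝ) ^ x * n ! := by
    have : (0:ℝ) < (n:ℝ) ^ x := Real.rpow_pos_of_pos hnp x
    have : (0:ℝ) < (n ! : ℝ) := by exact_mod_cast Nat.factorial_pos n
    positivity
  rw [Real.GammaSeq, div_div_eq_mul_div, mul_comm ((n:ℝ) ^ x * (n ! : ℝ)),
    mul_div_assoc, div_self hA.ne', mul_one]

lemma q_tendsto (a b : ℝ) (ha : 0 < a) (hb : 0 < b) :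
    Tendsto (fun n : ℕ => Gamma (b + n) / Gamma (a + b + n)) atTop (nhds 0) := by
  have hab : 0 < a + b := by linarith
  rw [← tendsto_add_atTop_iff_nat 1]
  have key : ∀ᶠ n : ℕ in atTop, Gamma (b + ((n:ℕ) + 1 : ℕ)) / Gamma (a + b + ((n:ℕ) + 1 : ℕ))
      = (Gamma b / Gamma (a + b)) * (n:ℝ) ^ (-a) *
        (Real.GammaSeq (a + b) n / Real.GammaSeq b n) := by
    filter_upwards [eventually_ne_atTop 0] with n hn
    have hnp : (0:ℝ) < (n:ℝ) := by exact_mod_cast Nat.pos_of_ne_zero hn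
    have hgb := gammaSeq_pos hb hn
    have hgab := gammaSeq_pos hab hn
    rw [Gamma_add_nat_succ hb hn, Gamma_add_nat_succ hab hn]
    have hfac : ((n ! : ℕ) : ℝ) ≠ 0 := by exact_mod_cast (Nat.factorial_pos n).ne'
    have hGb : Gamma b ≠ 0 := (Real.Gamma_pos_of_pos hb).ne'
    have hGab : Gamma (a + b) ≠ 0 := (Real.Gamma_pos_of_pos hab).ne'
    have hrb : ((n:ℝ) ^ b) ≠ 0 := (Real.rpow_pos_of_pos hnp b).ne'
    have hrab : ((n:ℝ) ^ (a+b)) ≠ 0 := (Real.rpow_pos_of_pos hnp (a+b)).ne'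
    have hrw : (n:ℝ) ^ (-a) = (n:ℝ) ^ b / (n:ℝ) ^ (a + b) := by
      rw [← Real.rpow_sub hnp]; ring_nf
    rw [hrw]
    field_simp
  refine Tendsto.congr' (EventuallyEq.symm key) ?_
  have h1 : Tendsto (fun n : ℕ => (n:ℝ) ^ (-a)) atTop (nhds 0) :=
    (tendsto_rpow_neg_atTop ha).comp tendsto_natCast_atTop_atTop
  have h2 : Tendsto (fun n : ℕ => Real.GammaSeq (a + b) n / Real.GammaSeq b n) atTop
      (nhds (Gamma (a + b) / Gamma b)) :=
    (Real.GammaSeq_tendsto_Gamma (a+b)).div (Real.GammaSeq_tendsto_Gamma b)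
      (Real.Gamma_pos_of_pos hb).ne'
  have := ((tendsto_const_nhds (x := Gamma b / Gamma (a+b))).mul h1).mul h2
  simpa using this

theorem gdp_new_cluster_prob_tendsto_zero (a b : ℝ) (ha : 0 < a) (hb : 0 < b) :
    Tendsto (fun n : ℕ => gdpNewClusterProb a b n) atTop (nhds 0) := by
  have hab : 0 < a + b := by linarith
  set q : ℕ → ℝ := fun n => Gamma (b + n) / Gamma (a + b + n) with hq_def
  have hq : Tendsto q atTop (nhds 0) := q_tendsto a b ha hb
  set f : ℕ → ℝ := fun n => (n:ℝ) * Gamma (b + n - 1) / Gamma (a + b + n) with hf_def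
  have hf : Tendsto f atTop (nhds 0) := by
    rw [← tendsto_add_atTop_iff_nat 1]
    have key : ∀ n : ℕ, f (n + 1) = q n * (((n+1:ℕ):ℝ) / ((n+1:ℕ) + (a + b - 1))) := by
      intro n
      have h2 : a + b + (n:ℝ) ≠ 0 := by positivity
      have h3 : a + b + ((n:ℕ)+1:ℕ) = (a + b + n) + 1 := by push_cast; ring
      have h4 : b + ((n:ℕ)+1:ℕ) - 1 = b + n := by push_cast; ring
      simp only [hf_def, hq_def, h3, h4, Real.Gamma_add_one h2]
      push_cast
      have hg : Gamma (a + b + n) ≠ 0 := (Real.Gamma_pos_of_pos (by positivity)).ne'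
      field_simp
      ring_nf
      rw [← add_mul, ← add_mul, mul_inv_cancel₀ h2]
    refine Tendsto.congr (fun n => (key n).symm) ?_
    have h5 : Tendsto (fun n : ℕ => ((n+1:ℕ):ℝ) / ((n+1:ℕ) + (a + b - 1))) atTop (nhds 1) :=
      (tendsto_natCast_div_add_atTop (a + b - 1)).comp (tendsto_add_atTop_nat 1)
    simpa using hq.mul h5
  set c : ℝ := Gamma (a + b) / Gamma b with hc_def
  have hkey : ∀ n : ℕ, gdpNewClusterProb a b n = a * c * f n / (1 - c * q n) := by
    intro n
    have hK : Gamma b * Gamma (a + b + n) ≠ 0 := by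
      have := Real.Gamma_pos_of_pos hb
      have := Real.Gamma_pos_of_pos (show (0:ℝ) < a + b + n by positivity)
      positivity
    have hnum : a * c * f n = ((n:ℝ) * a * Gamma (a+b) * Gamma (b + n - 1)) / (Gamma b * Gamma (a+b+n)) := by
      simp only [hc_def, hf_def]
      field_simp
    have hden : 1 - c * q n =
        (Gamma b * Gamma (a+b+n) - Gamma (a+b) * Gamma (b+n)) / (Gamma b * Gamma (a+b+n)) := by
      simp only [hc_def, hq_def]
      field_simp
    rw [gdpNewClusterProb, hnum, hden, div_div_div_comm, div_self hK, div_one]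
  rw [show (0:ℝ) = a * c * 0 / (1 - c * 0) by simp]
  refine Tendsto.congr (fun n => (hkey n).symm) ?_
  exact ((tendsto_const_nhds.mul hf)).div (tendsto_const_nhds.sub (tendsto_const_nhds.mul hq)) (by simp)
end

section
/- Fix a,b > 0 with a > 1. Then Σ_{n=1}^∞ n·a·Γ(a+b)Γ(b+n-1)/(Γ(b)Γ(a+b+n) − Γ(a+b)Γ(b+n)) converges to a finite constant. -/
open Real Filter

/-- Interpolation lower bound for Gamma, from log-convexity:
`x * Γ x ≤ Γ (x + t) * (x + t) ^ (1 - t)` for `0 < t ≤ 1`. -/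
lemma gamma_interp_bound {x t : ℝ} (hx : 0 < x) (ht : 0 < t) (ht1 : t ≤ 1) :
    x * Gamma x ≤ Gamma (x + t) * (x + t) ^ (1 - t) := by
  have hxt : 0 < x + t := by linarith
  have hGxt : 0 < Gamma (x + t) := Real.Gamma_pos_of_pos hxt
  have h2 : (x + t : ℝ) ∈ Set.Ioi (0 : ℝ) := hxt
  have h1 : (x + t + 1 : ℝ) ∈ Set.Ioi (0 : ℝ) := by
    simp only [Set.mem_Ioi]; linarith
  have hc := Real.convexOn_log_Gamma.2 h2 h1 ht.le (by linarith : (0:ℝ) ≤ 1 - t)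
    (by ring : t + (1 - t) = 1)
  simp only [smul_eq_mul, Function.comp_apply] at hc
  have harg : t * (x + t) + (1 - t) * (x + t + 1) = x + 1 := by ring
  rw [harg] at hc
  have hG1 : Gamma (x + t + 1) = (x + t) * Gamma (x + t) := Real.Gamma_add_one hxt.ne'
  rw [hG1, Real.log_mul hxt.ne' hGxt.ne', Real.Gamma_add_one hx.ne'] at hc
  have hc' : Real.log (x * Gamma x) ≤ Real.log (Gamma (x + t)) + (1 - t) * Real.log (x + t) := by
    nlinarith [hc]
  have hpos : 0 < x * Gamma x := mul_pos hx (Real.Gamma_pos_of_pos hx)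
  calc x * Gamma x = Real.exp (Real.log (x * Gamma x)) := (Real.exp_log hpos).symm
    _ ≤ Real.exp (Real.log (Gamma (x + t)) + (1 - t) * Real.log (x + t)) :=
        Real.exp_le_exp.mpr hc'
    _ = Gamma (x + t) * (x + t) ^ (1 - t) := by
        rw [Real.exp_add, Real.exp_log hGxt, Real.rpow_def_of_pos hxt,
          mul_comm (Real.log (x + t))]

theorem gdp_expected_clusters_bounded (a b : ℝ) (ha : 0 < a) (hb : 0 < b) (ha1 : 1 < a) :
    ∃ S : ℝ, Tendsto (fun N : ℕ => ∑ n ∈ Finset.range N, gdpNewClusterProb a b (n + 1))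
      atTop (nhds S) := by
  set θ : ℝ := min (a - 1) 1 with hθdef
  have hθ0 : 0 < θ := lt_min (by linarith) one_pos
  have hθ1 : θ ≤ 1 := min_le_right _ _
  have hθa : θ ≤ a - 1 := min_le_left _ _
  clear_value θ
  have hGb : 0 < Gamma b := Real.Gamma_pos_of_pos hb
  have hGab : 0 < Gamma (a + b) := Real.Gamma_pos_of_pos (by linarith)
  have hsum : Summable (fun n : ℕ => gdpNewClusterProb a b (n + 1)) := by
    apply summable_of_isBigO_nat
      (Real.summable_one_div_nat_rpow.mpr (by linarith : (1:ℝ) < 1 + θ))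
    rw [Asymptotics.isBigO_iff]
    refine ⟨4 * a * Gamma (a + b) / Gamma b, ?_⟩
    filter_upwards [Filter.eventually_ge_atTop 2,
      (tendsto_natCast_atTop_atTop (R := ℝ)).eventually_ge_atTop
        (2 * Gamma (a + b) / Gamma b)] with n hn2 hnc
    have hn2' : (2:ℝ) ≤ (n:ℝ) := by exact_mod_cast hn2
    have hnpos : (0:ℝ) < (n:ℝ) := by linarith
    set x : ℝ := b + n with hxdef
    have hx2 : 2 ≤ x := by rw [hxdef]; linarith
    have hnx : (n:ℝ) ≤ x := by rw [hxdef]; linarith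
    clear_value x
    have hx0 : 0 < x := by linarith
    have hGx : 0 < Gamma x := Real.Gamma_pos_of_pos hx0
    have hxt : 0 < x + θ := by linarith
    set R : ℝ := (x + θ) ^ (1 - θ) with hRdef
    have hR0 : 0 < R := Real.rpow_pos_of_pos hxt _
    have hRle : R ≤ x + 1 := by
      have h1 : R ≤ (x + θ) ^ (1:ℝ) :=
        Real.rpow_le_rpow_of_exponent_le (by linarith) (by linarith)
      rw [Real.rpow_one] at h1; linarith
    have hR2 : R ≤ 2 * x ^ (1 - θ) := by
      have h1 : R ≤ (2 * x) ^ (1 - θ) :=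
        Real.rpow_le_rpow hxt.le (by linarith) (by linarith)
      have h2 : (2 * x) ^ (1 - θ) = 2 ^ (1 - θ) * x ^ (1 - θ) :=
        Real.mul_rpow (by norm_num) hx0.le
      have h3 : (2:ℝ) ^ (1 - θ) ≤ 2 ^ (1:ℝ) :=
        Real.rpow_le_rpow_of_exponent_le (by norm_num) (by linarith)
      rw [Real.rpow_one] at h3
      have hxp : 0 < x ^ (1 - θ) := Real.rpow_pos_of_pos hx0 _
      nlinarith
    clear_value R
    -- key lower bound on Γ (x + a + 1)
    have hkey : x * (x + 1) * (x * Gamma x / R) ≤ Gamma (x + a + 1) := by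
      have hmono : Gamma (x + θ + 2) ≤ Gamma (x + a + 1) := by
        rcases eq_or_lt_of_le (show x + θ + 2 ≤ x + a + 1 by linarith) with h | h
        · rw [h]
        · exact (Real.Gamma_strictMonoOn_Ici (by simp only [Set.mem_Ici]; linarith)
            (by simp only [Set.mem_Ici]; linarith) h).le
      have hexp : Gamma (x + θ + 2) = (x + θ + 1) * ((x + θ) * Gamma (x + θ)) := by
        rw [show x + θ + 2 = (x + θ + 1) + 1 by ring, Real.Gamma_add_one (by linarith),
          show x + θ + 1 = (x + θ) + 1 by ring, Real.Gamma_add_one hxt.ne']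
      have hint : x * Gamma x / R ≤ Gamma (x + θ) := by
        rw [div_le_iff₀ hR0, hRdef]
        exact gamma_interp_bound hx0 hθ0 hθ1
      have hGxt : 0 < Gamma (x + θ) := Real.Gamma_pos_of_pos hxt
      have hq : 0 < x * Gamma x / R := by positivity
      have h5 : x * (x + 1) ≤ (x + θ + 1) * (x + θ) := by nlinarith
      calc x * (x + 1) * (x * Gamma x / R)
          ≤ (x + θ + 1) * (x + θ) * (x * Gamma x / R) :=
            mul_le_mul_of_nonneg_right h5 hq.le
        _ ≤ (x + θ + 1) * (x + θ) * Gamma (x + θ) :=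
            mul_le_mul_of_nonneg_left hint (by nlinarith)
        _ = (x + θ + 1) * ((x + θ) * Gamma (x + θ)) := by ring
        _ = Gamma (x + θ + 2) := hexp.symm
        _ ≤ Gamma (x + a + 1) := hmono
    -- rewrite the term
    have hrepr : gdpNewClusterProb a b (n + 1) =
        ((n:ℝ) + 1) * a * Gamma (a + b) * Gamma x /
          (Gamma b * Gamma (x + a + 1) - Gamma (a + b) * Gamma (x + 1)) := by
      unfold gdpNewClusterProb
      push_cast
      rw [show b + ((n:ℝ) + 1) - 1 = x by rw [hxdef]; ring,
        show a + b + ((n:ℝ) + 1) = x + a + 1 by rw [hxdef]; ring,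
        show b + ((n:ℝ) + 1) = x + 1 by rw [hxdef]; ring]
    set L : ℝ := x * Gamma x with hLdef
    have hL0 : 0 < L := mul_pos hx0 hGx
    have hGx1 : Gamma (x + 1) = L := Real.Gamma_add_one hx0.ne'
    clear_value L
    set Dlow : ℝ := Gamma b * (x * (x + 1) * L) / (2 * R) with hDlowdef
    have hDlow0 : 0 < Dlow := by rw [hDlowdef]; positivity
    clear_value Dlow
    -- denominator lower bound
    have hDge : Dlow ≤ Gamma b * Gamma (x + a + 1) - Gamma (a + b) * Gamma (x + 1) := by
      rw [hGx1]
      have h1 : Gamma b * (x * (x + 1) * (L / R)) ≤ Gamma b * Gamma (x + a + 1) :=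
        mul_le_mul_of_nonneg_left hkey hGb.le
      have h2 : Gamma (a + b) * L ≤ Gamma b * (x * (x + 1) * L) / (2 * R) := by
        rw [le_div_iff₀ (by positivity)]
        have hx' : 2 * Gamma (a + b) ≤ Gamma b * x := by
          rw [div_le_iff₀ hGb] at hnc
          calc 2 * Gamma (a + b) ≤ Gamma b * (n:ℝ) := by linarith
            _ ≤ Gamma b * x := mul_le_mul_of_nonneg_left hnx hGb.le
        have hR' : 2 * R ≤ 2 * (x + 1) := by linarith
        calc Gamma (a + b) * L * (2 * R)
            ≤ Gamma (a + b) * L * (2 * (x + 1)) :=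
              mul_le_mul_of_nonneg_left hR' (by positivity)
          _ = (2 * Gamma (a + b)) * (L * (x + 1)) := by ring
          _ ≤ (Gamma b * x) * (L * (x + 1)) :=
              mul_le_mul_of_nonneg_right hx' (by positivity)
          _ = Gamma b * (x * (x + 1) * L) := by ring
      have h3 : Gamma b * (x * (x + 1) * L) / R =
          Gamma b * (x * (x + 1) * (L / R)) := by ring
      have h4 : Dlow = Gamma b * (x * (x + 1) * L) / R
          - Gamma b * (x * (x + 1) * L) / (2 * R) := by
        rw [hDlowdef]; field_simp [hR0.ne']; ring
      rw [h4, h3]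
      linarith
    -- numerator
    set Num : ℝ := ((n:ℝ) + 1) * a * Gamma (a + b) * Gamma x with hNumdef
    have hNum0 : 0 < Num := by rw [hNumdef]; positivity
    clear_value Num
    have hstep : gdpNewClusterProb a b (n + 1) ≤ Num / Dlow := by
      rw [hrepr]
      exact div_le_div_of_nonneg_left hNum0.le hDlow0 hDge
    -- final bound
    set P : ℝ := (n:ℝ) ^ ((1:ℝ) + θ) with hPdef
    have hnp : 0 < P := by rw [hPdef]; exact Real.rpow_pos_of_pos hnpos _
    have hxp : 0 < x ^ ((1:ℝ) + θ) := Real.rpow_pos_of_pos hx0 _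
    have hnle : P ≤ x ^ ((1:ℝ) + θ) := by
      rw [hPdef]; exact Real.rpow_le_rpow hnpos.le hnx (by linarith)
    clear_value P
    have hfin : Num / Dlow ≤ (4 * a * Gamma (a + b) / Gamma b) * (1 / P) := by
      have hxsplit : x ^ ((1:ℝ) + θ) * x ^ (1 - θ) = x * x := by
        rw [← Real.rpow_add hx0, show (1:ℝ) + θ + (1 - θ) = 2 by ring,
          show ((2:ℝ)) = ((2:ℕ):ℝ) by norm_num, Real.rpow_natCast]
        ring
      have hn1 : (n:ℝ) + 1 ≤ x + 1 := by linarith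
      have hxp' : 0 < x ^ (1 - θ) := Real.rpow_pos_of_pos hx0 _
      have hchain : ((n:ℝ) + 1) * P * (2 * R) ≤ 4 * (x * x * (x + 1)) := by
        calc ((n:ℝ) + 1) * P * (2 * R)
            ≤ ((x + 1) * (x ^ ((1:ℝ) + θ))) * (2 * (2 * x ^ (1 - θ))) := by
              apply mul_le_mul (mul_le_mul hn1 hnle hnp.le (by linarith))
                (by linarith) (by linarith) (by positivity)
          _ = 4 * (x + 1) * (x ^ ((1:ℝ) + θ) * x ^ (1 - θ)) := by ring
          _ = 4 * (x + 1) * (x * x) := by rw [hxsplit]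
          _ = 4 * (x * x * (x + 1)) := by ring
      rw [div_le_iff₀ hDlow0]
      have hgoal : (4 * a * Gamma (a + b) / Gamma b) * (1 / P) * Dlow =
          4 * a * Gamma (a + b) * (x * (x + 1) * L) / (P * (2 * R)) := by
        rw [hDlowdef]
        field_simp [hGb.ne', hnp.ne', hR0.ne']
      rw [hgoal, le_div_iff₀ (by positivity : (0:ℝ) < P * (2 * R))]
      have h6 := mul_le_mul_of_nonneg_left hchain
        (show (0:ℝ) ≤ a * Gamma (a + b) * Gamma x by positivity)
      calc Num * (P * (2 * R)) = ((n:ℝ) + 1) * a * Gamma (a + b) * Gamma x * (P * (2 * R)) := by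
            rw [hNumdef]
        _ = a * Gamma (a + b) * Gamma x * (((n:ℝ) + 1) * P * (2 * R)) := by ring
        _ ≤ a * Gamma (a + b) * Gamma x * (4 * (x * x * (x + 1))) := h6
        _ = 4 * a * Gamma (a + b) * (x * (x + 1) * (x * Gamma x)) := by ring
        _ = 4 * a * Gamma (a + b) * (x * (x + 1) * L) := by rw [hLdef]
    have hnonneg : 0 ≤ gdpNewClusterProb a b (n + 1) := by
      rw [hrepr]
      exact div_nonneg hNum0.le (le_trans hDlow0.le hDge)
    rw [Real.norm_eq_abs, abs_of_nonneg hnonneg, Real.norm_eq_abs,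
      abs_of_nonneg (one_div_nonneg.mpr hnp.le)]
    exact le_trans hstep hfin
  exact ⟨_, hsum.hasSum.tendsto_sum_nat⟩
end

section
/- Fix a,b > 0 with a ≤ 1. Then Σ_{n=1}^N n·a·Γ(a+b)Γ(b+n-1)/(Γ(b)Γ(a+b+n) − Γ(a+b)Γ(b+n)) → ∞ as N → ∞. -/
open Real Filter

set_option maxHeartbeats 1000000 in
theorem gdp_expected_clusters_unbounded (a b : ℝ) (ha : 0 < a) (hb : 0 < b) (ha1 : a ≤ 1) :
    Tendsto (fun N : ℕ => ∑ n ∈ Finset.range N, gdpNewClusterProb a b (n + 1))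
      atTop atTop := by
  have hΓb : 0 < Gamma b := Gamma_pos_of_pos hb
  have hΓab : 0 < Gamma (a + b) := Gamma_pos_of_pos (by linarith)
  set K : ℝ := a * Gamma (a + b) / (Gamma b * (1 + b) ^ 2) with hKdef
  have hKpos : 0 < K := div_pos (mul_pos ha hΓab) (mul_pos hΓb (by positivity))
  -- positivity of denominators, by induction
  have hD : ∀ n : ℕ, 0 < Gamma b * Gamma (a + b + ((n : ℝ) + 1)) -
      Gamma (a + b) * Gamma (b + ((n : ℝ) + 1)) := by
    intro n
    induction n with
    | zero =>
      simp only [Nat.cast_zero, zero_add]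
      rw [show a + b + 1 = (a + b) + 1 by ring, Gamma_add_one (by positivity),
        Gamma_add_one (by positivity : b ≠ 0)]
      have : Gamma b * ((a + b) * Gamma (a + b)) - Gamma (a + b) * (b * Gamma b)
          = a * (Gamma b * Gamma (a + b)) := by ring
      rw [this]
      positivity
    | succ m ih =>
      have hm : (0 : ℝ) ≤ m := Nat.cast_nonneg m
      push_cast
      rw [show a + b + ((m : ℝ) + 1 + 1) = (a + b + ((m : ℝ) + 1)) + 1 by ring,
        show b + ((m : ℝ) + 1 + 1) = (b + ((m : ℝ) + 1)) + 1 by ring,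
        Gamma_add_one (by positivity), Gamma_add_one (by positivity)]
      have key : Gamma b * ((a + b + ((m : ℝ) + 1)) * Gamma (a + b + ((m : ℝ) + 1))) -
          Gamma (a + b) * ((b + ((m : ℝ) + 1)) * Gamma (b + ((m : ℝ) + 1)))
          = (b + ((m : ℝ) + 1)) * (Gamma b * Gamma (a + b + ((m : ℝ) + 1)) -
              Gamma (a + b) * Gamma (b + ((m : ℝ) + 1)))
            + a * (Gamma b * Gamma (a + b + ((m : ℝ) + 1))) := by ring
      rw [key]
      have hΓ1 : 0 < Gamma (a + b + ((m : ℝ) + 1)) := Gamma_pos_of_pos (by positivity)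
      have hb1 : (0:ℝ) < b + ((m : ℝ) + 1) := by positivity
      have t1 : 0 < (b + ((m : ℝ) + 1)) * (Gamma b * Gamma (a + b + ((m : ℝ) + 1)) -
          Gamma (a + b) * Gamma (b + ((m : ℝ) + 1))) := mul_pos hb1 ih
      have t2 : 0 < a * (Gamma b * Gamma (a + b + ((m : ℝ) + 1))) :=
        mul_pos ha (mul_pos hΓb hΓ1)
      linarith
  -- each term is nonnegative
  have hterm_nonneg : ∀ n : ℕ, 0 ≤ gdpNewClusterProb a b (n + 1) := by
    intro n
    unfold gdpNewClusterProb
    have hden := hD n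
    push_cast
    apply div_nonneg _ (le_of_lt hden)
    have h0 : (0:ℝ) < b + ((n : ℝ) + 1) - 1 := by
      have : (0:ℝ) ≤ n := Nat.cast_nonneg n
      linarith
    have : 0 < Gamma (b + ((n : ℝ) + 1) - 1) := Gamma_pos_of_pos h0
    positivity
  -- key lower bound for n ≥ 1
  have hterm : ∀ n : ℕ, 1 ≤ n → K / ((n : ℝ) + 1) ≤ gdpNewClusterProb a b (n + 1) := by
    intro n hn
    have hn1 : (1 : ℝ) ≤ (n : ℝ) := by exact_mod_cast hn
    have hden := hD n
    unfold gdpNewClusterProb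
    push_cast
    set m : ℝ := (n : ℝ) + 1 with hm
    have hm2 : (2 : ℝ) ≤ m := by rw [hm]; linarith
    -- denominator upper bound
    have hmono : Gamma (a + b + m) ≤ Gamma (b + m + 1) := by
      rcases eq_or_lt_of_le (show a + b + m ≤ b + m + 1 by linarith) with h | h
      · rw [h]
      · exact le_of_lt (Gamma_strictMonoOn_Ici (by simp only [Set.mem_Ici]; nlinarith)
          (by simp only [Set.mem_Ici]; nlinarith) h)
    have hΓbm1 : 0 < Gamma (b + m - 1) := Gamma_pos_of_pos (by nlinarith)
    have hbm0 : (0:ℝ) < b + m := by nlinarith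
    have hbm10 : (0:ℝ) < b + m - 1 := by nlinarith
    have e1 : Gamma (b + m) = (b + m - 1) * Gamma (b + m - 1) := by
      rw [← Gamma_add_one (ne_of_gt hbm10)]
      congr 1
      ring
    have hexp : Gamma (b + m + 1) = (b + m) * ((b + m - 1) * Gamma (b + m - 1)) := by
      rw [Gamma_add_one (ne_of_gt hbm0), e1]
    have hDub : Gamma b * Gamma (a + b + m) - Gamma (a + b) * Gamma (b + m)
        ≤ Gamma b * ((b + m) * ((b + m - 1) * Gamma (b + m - 1))) := by
      have hΓbmpos : 0 < Gamma (b + m) := Gamma_pos_of_pos (by nlinarith)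
      have h2 := mul_le_mul_of_nonneg_left hmono (le_of_lt hΓb)
      rw [hexp] at h2
      linarith [mul_pos hΓab hΓbmpos]
    have hnum_pos : 0 < m * a * Gamma (a + b) * Gamma (b + m - 1) :=
      mul_pos (mul_pos (mul_pos (by linarith) ha) hΓab) hΓbm1
    have step1 : m * a * Gamma (a + b) * Gamma (b + m - 1) /
          (Gamma b * ((b + m) * ((b + m - 1) * Gamma (b + m - 1))))
        ≤ m * a * Gamma (a + b) * Gamma (b + m - 1) /
          (Gamma b * Gamma (a + b + m) - Gamma (a + b) * Gamma (b + m)) :=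
      div_le_div_of_nonneg_left (le_of_lt hnum_pos) hden hDub
    refine le_trans ?_ step1
    rw [hKdef, div_div]
    rw [div_le_div_iff₀ (by positivity)
      (mul_pos hΓb (mul_pos hbm0 (mul_pos hbm10 hΓbm1)))]
    have hbm : b + m ≤ (1 + b) * m := by nlinarith
    have hbm1 : b + m - 1 ≤ (1 + b) * m := by nlinarith
    have hfact : (b + m) * (b + m - 1) ≤ (1 + b) ^ 2 * m * m := by nlinarith
    calc a * Gamma (a + b) * (Gamma b * ((b + m) * ((b + m - 1) * Gamma (b + m - 1))))
        = (a * Gamma (a + b) * Gamma b * Gamma (b + m - 1)) * ((b + m) * (b + m - 1)) := by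
          ring
      _ ≤ (a * Gamma (a + b) * Gamma b * Gamma (b + m - 1)) * ((1 + b) ^ 2 * m * m) :=
          mul_le_mul_of_nonneg_left hfact
            (le_of_lt (mul_pos (mul_pos (mul_pos ha hΓab) hΓb) hΓbm1))
      _ = m * a * Gamma (a + b) * Gamma (b + m - 1) * (Gamma b * (1 + b) ^ 2 * m) := by
          ring
  -- comparison with harmonic series
  have hsum : ∀ N : ℕ, K * (∑ n ∈ Finset.range N, (1 / ((n : ℝ) + 1))) - K
      ≤ ∑ n ∈ Finset.range N, gdpNewClusterProb a b (n + 1) := by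
    intro N
    have h1 : ∑ n ∈ Finset.range N, (K / ((n : ℝ) + 1) - if n = 0 then K else 0)
        ≤ ∑ n ∈ Finset.range N, gdpNewClusterProb a b (n + 1) := by
      apply Finset.sum_le_sum
      intro n _
      rcases Nat.eq_zero_or_pos n with h | h
      · subst h; simpa using hterm_nonneg 0
      · rw [if_neg (Nat.pos_iff_ne_zero.mp h)]
        linarith [hterm n h]
    refine le_trans ?_ h1
    rw [Finset.sum_sub_distrib]
    have h2 : ∑ n ∈ Finset.range N, (if n = 0 then K else 0) ≤ K := by
      rw [Finset.sum_ite_eq' (Finset.range N) 0 (fun _ => K)]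
      split
      · exact le_rfl
      · linarith
    have hL : K * ∑ n ∈ Finset.range N, (1 / ((n : ℝ) + 1))
        = ∑ n ∈ Finset.range N, K / ((n : ℝ) + 1) := by
      rw [Finset.mul_sum]
      exact Finset.sum_congr rfl fun n _ => mul_one_div K _
    rw [hL]
    linarith
  apply tendsto_atTop_mono hsum
  have h3 : Tendsto (fun N : ℕ => K * ∑ n ∈ Finset.range N, (1 / ((n : ℝ) + 1)))
      atTop atTop :=
    (Real.tendsto_sum_range_one_div_nat_succ_atTop).const_mul_atTop hKpos
  simpa [sub_eq_add_neg] using tendsto_atTop_add_const_right atTop (-K) h3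
end

section
/- Fix a,b > 0. Then n^a · [n·a·Γ(a+b)Γ(b+n-1)/(Γ(b)Γ(a+b+n) − Γ(a+b)Γ(b+n))] converges to a positive finite limit as n → ∞. -/
open Real Filter

lemma gamma_prod (x : ℝ) (hx : 0 < x) (n : ℕ) :
    Gamma x * ∏ j ∈ Finset.range n, (x + j) = Gamma (x + n) := by
  induction n with
  | zero => simp
  | succ n ih =>
      rw [Finset.prod_range_succ, ← mul_assoc, ih]
      have hxn : x + (n : ℝ) ≠ 0 := by positivity
      push_cast
      rw [show x + ((n:ℝ)+1) = (x + ↑n) + 1 by ring, Real.Gamma_add_one hxn]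
      ring

lemma gamma_ratio_tendsto (x : ℝ) (hx : 0 < x) :
    Tendsto (fun n : ℕ => Gamma (x + n) / ((n.factorial : ℝ) * (n : ℝ) ^ (x - 1))) atTop (nhds 1) := by
  have hΓ : Gamma x ≠ 0 := (Real.Gamma_pos_of_pos hx).ne'
  have h1 : Tendsto (fun n : ℕ => Real.GammaSeq x n / Gamma x) atTop (nhds 1) := by
    simpa [div_self hΓ] using (Real.GammaSeq_tendsto_Gamma x).div_const (Gamma x)
  have h1' : Tendsto (fun n : ℕ => (n : ℝ) ^ x * n.factorial / Gamma (x + (n + 1))) atTop (nhds 1) := by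
    refine h1.congr fun n => ?_
    rw [Real.GammaSeq, div_div, mul_comm (∏ j ∈ Finset.range (n + 1), (x + j)) (Gamma x),
      gamma_prod x hx]
    push_cast
    ring_nf
  have h2 : Tendsto (fun n : ℕ => Gamma (x + (n + 1)) / ((n : ℝ) ^ x * (n.factorial:ℝ))) atTop (nhds 1) := by
    simpa using (h1'.inv₀ one_ne_zero)
  have h3 := h2.mul (tendsto_natCast_div_add_atTop (x : ℝ))
  rw [mul_one] at h3
  refine h3.congr' ?_
  filter_upwards [eventually_ge_atTop 1] with n hn
  have hn0 : (0 : ℝ) < n := by exact_mod_cast hn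
  have hΓn : Gamma (x + ((n : ℝ) + 1)) = (x + n) * Gamma (x + n) := by
    have hne : x + (n : ℝ) ≠ 0 := by positivity
    rw [← add_assoc, Real.Gamma_add_one hne]
  have hrp : (n : ℝ) ^ x = (n : ℝ) ^ (x - 1) * n := by
    rw [← Real.rpow_add_one hn0.ne' (x - 1), sub_add_cancel]
  have hxn : x + (n : ℝ) ≠ 0 := by positivity
  have hfact : (n.factorial : ℝ) ≠ 0 := by exact_mod_cast n.factorial_ne_zero
  have hpow : (n : ℝ) ^ (x - 1) ≠ 0 := (Real.rpow_pos_of_pos hn0 _).ne'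
  push_cast at hΓn ⊢
  rw [hΓn, hrp]
  field_simp
  ring

theorem gdp_new_cluster_prob_power_law (a b : ℝ) (ha : 0 < a) (hb : 0 < b) :
    ∃ L : ℝ, 0 < L ∧
      Tendsto (fun n : ℕ => (n : ℝ) ^ a * gdpNewClusterProb a b n) atTop (nhds L) := by
  have hab : 0 < a + b := by linarith
  have hΓb : 0 < Gamma b := Real.Gamma_pos_of_pos hb
  have hΓab : 0 < Gamma (a + b) := Real.Gamma_pos_of_pos hab
  refine ⟨a * Gamma (a + b) / Gamma b, by positivity, ?_⟩
  have h1 : Tendsto (fun n : ℕ =>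
      Gamma (a + b + n) / ((n.factorial : ℝ) * (n : ℝ) ^ (a + b - 1))) atTop (nhds 1) :=
    gamma_ratio_tendsto (a + b) hab
  have h2 : Tendsto (fun n : ℕ =>
      Gamma (b + n) / ((n.factorial : ℝ) * (n : ℝ) ^ (b - 1))) atTop (nhds 1) :=
    gamma_ratio_tendsto b hb
  have h3 : Tendsto (fun n : ℕ => (n : ℝ) ^ (-a)) atTop (nhds 0) :=
    (tendsto_rpow_neg_atTop ha).comp tendsto_natCast_atTop_atTop
  have h4 : Tendsto (fun n : ℕ => (n : ℝ) / ((n : ℝ) + (b - 1))) atTop (nhds 1) :=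
    tendsto_natCast_div_add_atTop (b - 1)
  have hE : Tendsto (fun n : ℕ =>
      Gamma b * (Gamma (a + b + n) / ((n.factorial : ℝ) * (n : ℝ) ^ (a + b - 1)))
        - Gamma (a + b) * (Gamma (b + n) / ((n.factorial : ℝ) * (n : ℝ) ^ (b - 1))) * (n : ℝ) ^ (-a))
      atTop (nhds (Gamma b)) := by
    have := ((tendsto_const_nhds (x := Gamma b)).mul h1).sub
      ((((tendsto_const_nhds (x := Gamma (a + b)))).mul h2).mul h3)
    simpa using this
  have hT : Tendsto (fun n : ℕ =>
      (a * Gamma (a + b) * (Gamma (b + n) / ((n.factorial : ℝ) * (n : ℝ) ^ (b - 1)))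
          * ((n : ℝ) / ((n : ℝ) + (b - 1)))) /
      (Gamma b * (Gamma (a + b + n) / ((n.factorial : ℝ) * (n : ℝ) ^ (a + b - 1)))
        - Gamma (a + b) * (Gamma (b + n) / ((n.factorial : ℝ) * (n : ℝ) ^ (b - 1))) * (n : ℝ) ^ (-a)))
      atTop (nhds (a * Gamma (a + b) / Gamma b)) := by
    have := (((tendsto_const_nhds (x := a * Gamma (a + b))).mul h2).mul h4).div hE hΓb.ne'
    simpa [Pi.div_def] using this
  refine Tendsto.congr' ?_ hT
  filter_upwards [eventually_ge_atTop 1] with n hn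
  have hN : (0 : ℝ) < n := by exact_mod_cast hn
  have hN1 : (1 : ℝ) ≤ n := by exact_mod_cast hn
  have hbn : (0 : ℝ) < b + n - 1 := by linarith
  have hfact : (n.factorial : ℝ) ≠ 0 := by exact_mod_cast n.factorial_ne_zero
  have hu : (0 : ℝ) < (n : ℝ) ^ a := Real.rpow_pos_of_pos hN a
  have hv : (0 : ℝ) < (n : ℝ) ^ (b - 1) := Real.rpow_pos_of_pos hN (b - 1)
  have hG1 : Gamma (b + (n : ℝ) - 1) = Gamma (b + n) / (b + (n : ℝ) - 1) := by
    have h := Real.Gamma_add_one hbn.ne'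
    rw [sub_add_cancel] at h
    rw [h, mul_div_cancel_left₀ _ hbn.ne']
  have hpow : (n : ℝ) ^ (a + b - 1) = (n : ℝ) ^ a * (n : ℝ) ^ (b - 1) := by
    rw [← Real.rpow_add hN]; ring_nf
  have hneg : (n : ℝ) ^ (-a) = ((n : ℝ) ^ a)⁻¹ := Real.rpow_neg hN.le a
  have hnb : (n : ℝ) + (b - 1) = b + (n : ℝ) - 1 := by ring
  rw [gdpNewClusterProb, hG1, hpow, hneg, hnb]
  have hden : Gamma b * (Gamma (a + b + n) / ((n.factorial : ℝ) * ((n : ℝ) ^ a * (n : ℝ) ^ (b - 1))))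
        - Gamma (a + b) * (Gamma (b + n) / ((n.factorial : ℝ) * (n : ℝ) ^ (b - 1))) * ((n : ℝ) ^ a)⁻¹
      = (Gamma b * Gamma (a + b + n) - Gamma (a + b) * Gamma (b + n))
          / ((n.factorial : ℝ) * ((n : ℝ) ^ a * (n : ℝ) ^ (b - 1))) := by
    field_simp
  have hnum : a * Gamma (a + b) * (Gamma (b + n) / ((n.factorial : ℝ) * (n : ℝ) ^ (b - 1)))
        * ((n : ℝ) / (b + (n : ℝ) - 1)) * ((n.factorial : ℝ) * ((n : ℝ) ^ a * (n : ℝ) ^ (b - 1)))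
      = (n : ℝ) ^ a * ((n : ℝ) * a * Gamma (a + b) * (Gamma (b + n) / (b + (n : ℝ) - 1))) := by
    field_simp
  rw [hden, div_div_eq_mul_div, hnum, mul_div_assoc]
end

section
/- Let (u_k)_{k≥1} be independent with u_k ∼ Beta(1−α, β+kα) for 0 ≤ α < 1 and β > −α, and let w_k = u_k·Π_{s<k}(1−u_s). Then E[Π_{k=1}^n (1−u_k)] = Π_{k=1}^n (β+kα)/(1+β+(k−1)α), and this product tends to 0 as n → ∞, so Σ_k w_k = 1 almost surely. -/
open Real MeasureTheory ProbabilityTheory Filter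
open scoped ENNReal NNReal

/-- Density of the Beta(a,b) distribution on (0,1). -/
noncomputable def betaDensity (a b x : ℝ) : ℝ :=
  x ^ (a - 1) * (1 - x) ^ (b - 1) / (Real.Gamma a * Real.Gamma b / Real.Gamma (a + b))

/-- The Beta(a,b) probability measure on ℝ. -/
noncomputable def betaMeasure (a b : ℝ) : Measure ℝ :=
  (volume.restrict (Set.Ioo 0 1)).withDensity fun x => ENNReal.ofReal (betaDensity a b x)

lemma betaInt_real {a b : ℝ} (ha : 0 < a) (hb : 0 < b) :
    ∫ x in Set.Ioo (0:ℝ) 1, x ^ (a - 1) * (1 - x) ^ (b - 1)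
      = Real.Gamma a * Real.Gamma b / Real.Gamma (a + b) := by
  have hC := Complex.Gamma_mul_Gamma_eq_betaIntegral (s := (a : ℂ)) (t := (b : ℂ))
    (by simpa using ha) (by simpa using hb)
  have hbeta : Complex.betaIntegral (a : ℂ) (b : ℂ)
      = ((∫ x in Set.Ioo (0:ℝ) 1, x ^ (a - 1) * (1 - x) ^ (b - 1) : ℝ) : ℂ) := by
    rw [Complex.betaIntegral, intervalIntegral.integral_of_le zero_le_one,
      MeasureTheory.integral_Ioc_eq_integral_Ioo]
    have hcongr : ∫ t in Set.Ioo (0:ℝ) 1, (t:ℂ) ^ ((a:ℂ) - 1) * (1 - (t:ℂ)) ^ ((b:ℂ) - 1)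
        = ∫ t in Set.Ioo (0:ℝ) 1, ((t ^ (a - 1) * (1 - t) ^ (b - 1) : ℝ) : ℂ) := by
      refine setIntegral_congr_fun measurableSet_Ioo (fun x hx => ?_)
      have h1 : (0:ℝ) ≤ x := hx.1.le
      have h2 : (0:ℝ) ≤ 1 - x := by linarith [hx.2.le]
      rw [Complex.ofReal_mul, Complex.ofReal_cpow h1, Complex.ofReal_cpow h2]
      push_cast
      ring
    rw [hcongr]; exact integral_ofReal
  rw [hbeta] at hC
  have hab : ((a : ℂ) + (b : ℂ)) = ((a + b : ℝ) : ℂ) := by push_cast; ring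
  rw [hab, Complex.Gamma_ofReal, Complex.Gamma_ofReal, Complex.Gamma_ofReal,
    ← Complex.ofReal_mul, ← Complex.ofReal_mul, Complex.ofReal_inj] at hC
  have hG : Real.Gamma (a + b) ≠ 0 := (Real.Gamma_pos_of_pos (by linarith)).ne'
  field_simp at hC ⊢
  linarith [hC]

lemma betaMeasure_exp_one_sub {a b : ℝ} (ha : 0 < a) (hb : 0 < b) :
    ∫ x, (1 - x) ∂(_root_.betaMeasure a b) = b / (a + b) := by
  have hmeasd : Measurable fun x => (betaDensity a b x).toNNReal := by
    apply Measurable.real_toNNReal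
    unfold betaDensity
    fun_prop
  have hrw : (fun x => ENNReal.ofReal (betaDensity a b x))
      = fun x => ((betaDensity a b x).toNNReal : ℝ≥0∞) := rfl
  rw [_root_.betaMeasure, hrw, integral_withDensity_eq_integral_smul hmeasd]
  set B := Real.Gamma a * Real.Gamma b / Real.Gamma (a + b) with hB
  have hGa : 0 < Real.Gamma a := Real.Gamma_pos_of_pos ha
  have hGb : 0 < Real.Gamma b := Real.Gamma_pos_of_pos hb
  have hGab : 0 < Real.Gamma (a + b) := Real.Gamma_pos_of_pos (by linarith)
  have hBpos : 0 < B := by positivity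
  have hcongr : ∫ x in Set.Ioo (0:ℝ) 1, (betaDensity a b x).toNNReal • (1 - x)
      = ∫ x in Set.Ioo (0:ℝ) 1, (x ^ (a - 1) * (1 - x) ^ ((b + 1) - 1)) / B := by
    refine setIntegral_congr_fun measurableSet_Ioo (fun x hx => ?_)
    have h1 : (0:ℝ) < x := hx.1
    have h2 : (0:ℝ) < 1 - x := by linarith [hx.2]
    have hd : 0 ≤ betaDensity a b x := by
      unfold betaDensity
      positivity
    rw [NNReal.smul_def, Real.coe_toNNReal _ hd, smul_eq_mul]
    unfold betaDensity
    rw [show (b + 1) - 1 = (b - 1) + 1 by ring, Real.rpow_add h2, Real.rpow_one]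
    rw [← hB]
    ring
  rw [hcongr, integral_div, betaInt_real ha (by linarith : (0:ℝ) < b + 1)]
  rw [Real.Gamma_add_one hb.ne', show a + (b + 1) = (a + b) + 1 by ring,
    Real.Gamma_add_one (by linarith : a + b ≠ 0)]
  have hba : Real.Gamma (b + a) ≠ 0 := by rw [add_comm]; exact hGab.ne'
  field_simp [hGa.ne', hGb.ne', hGab.ne', hba]
  rw [hB]
  field_simp [hGab.ne']

lemma prod_tendsto_zero {α β : ℝ} (hα : 0 ≤ α) (hα1 : α < 1) (hβ : -α < β) :
    Tendsto (fun n : ℕ => ∏ k ∈ Finset.range n, (β + (k + 1) * α) / (1 + β + k * α))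
      atTop (nhds 0) := by
  have hb1 : 0 < 1 + β := by linarith
  have hden : ∀ k : ℕ, 0 < 1 + β + k * α := fun k =>
    add_pos_of_pos_of_nonneg hb1 (mul_nonneg (Nat.cast_nonneg k) hα)
  set c : ℕ → ℝ := fun k => (1 - α) / (1 + β + k * α) with hc
  have hrc : ∀ k : ℕ, (β + (k + 1) * α) / (1 + β + k * α) = 1 - c k := by
    intro k
    rw [hc]
    field_simp
    ring
  have hrnonneg : ∀ k : ℕ, 0 ≤ (β + (k + 1) * α) / (1 + β + k * α) := by
    intro k
    have hnum : 0 ≤ β + (k + 1) * α := by nlinarith [mul_nonneg (Nat.cast_nonneg (α := ℝ) k) hα]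
    exact div_nonneg hnum (hden k).le
  have hrle : ∀ k : ℕ, (β + (k + 1) * α) / (1 + β + k * α) ≤ Real.exp (-c k) := by
    intro k
    rw [hrc k]
    linarith [Real.add_one_le_exp (-c k)]
  -- bound on products
  have hprodle : ∀ n : ℕ, ∏ k ∈ Finset.range n, (β + (k + 1) * α) / (1 + β + k * α)
      ≤ Real.exp (-(∑ k ∈ Finset.range n, c k)) := by
    intro n
    calc ∏ k ∈ Finset.range n, (β + (k + 1) * α) / (1 + β + k * α)
        ≤ ∏ k ∈ Finset.range n, Real.exp (-c k) :=
          Finset.prod_le_prod (fun k _ => hrnonneg k) (fun k _ => hrle k)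
      _ = Real.exp (∑ k ∈ Finset.range n, -c k) := (Real.exp_sum _ _).symm
      _ = Real.exp (-(∑ k ∈ Finset.range n, c k)) := by rw [Finset.sum_neg_distrib]
  have hprodpos : ∀ n : ℕ, 0 ≤ ∏ k ∈ Finset.range n, (β + (k + 1) * α) / (1 + β + k * α) :=
    fun n => Finset.prod_nonneg (fun k _ => hrnonneg k)
  -- divergence of ∑ c k
  set C : ℝ := max (1 + β) α with hC
  have hCpos : 0 < C := lt_max_of_lt_left hb1
  have hck : ∀ k : ℕ, (1 - α) / C * (1 / (k + 1)) ≤ c k := by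
    intro k
    have h1 : 1 + β + k * α ≤ C * (k + 1) := by
      have h2 : (k : ℝ) * α ≤ k * C := by
        exact mul_le_mul_of_nonneg_left (le_max_right _ _) (Nat.cast_nonneg k)
      have h3 : 1 + β ≤ C := le_max_left _ _
      nlinarith
    have h4 : (1 - α) / (C * (k + 1)) ≤ (1 - α) / (1 + β + k * α) :=
      div_le_div_of_nonneg_left (by linarith) (hden k) h1
    calc (1 - α) / C * (1 / (k + 1)) = (1 - α) / (C * (k + 1)) := by
          rw [div_mul_div_comm, mul_one]
      _ ≤ c k := h4
  have hharm : Tendsto (fun n : ℕ => ∑ k ∈ Finset.range n, (1 : ℝ) / (k + 1)) atTop atTop :=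
    tendsto_sum_range_one_div_nat_succ_atTop
  have hCc : (0 : ℝ) < (1 - α) / C := div_pos (by linarith) hCpos
  have hsum : Tendsto (fun n : ℕ => ∑ k ∈ Finset.range n, c k) atTop atTop := by
    apply tendsto_atTop_mono (fun n => ?_) (hharm.const_mul_atTop hCc)
    rw [Finset.mul_sum]
    exact Finset.sum_le_sum (fun k _ => hck k)
  have hexp : Tendsto (fun n : ℕ => Real.exp (-(∑ k ∈ Finset.range n, c k))) atTop (nhds 0) :=
    Real.tendsto_exp_atBot.comp (tendsto_neg_atTop_atBot.comp hsum)
  exact squeeze_zero hprodpos hprodle hexp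

theorem py_stick_breaking_sums_to_one {Ω : Type*} [MeasurableSpace Ω]
    (μ : Measure Ω) [IsProbabilityMeasure μ]
    (α β : ℝ) (hα : 0 ≤ α) (hα1 : α < 1) (hβ : -α < β) (u : ℕ → Ω → ℝ)
    (hmeas : ∀ k, Measurable (u k))
    (hlaw : ∀ k : ℕ, μ.map (u k) = _root_.betaMeasure (1 - α) (β + (k + 1) * α))
    (hindep : iIndepFun u μ) :
    (∀ n : ℕ, ∫ ω, ∏ k ∈ Finset.range n, (1 - u k ω) ∂μ =
        ∏ k ∈ Finset.range n, (β + (k + 1) * α) / (1 + β + k * α)) ∧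
    Tendsto (fun n : ℕ => ∏ k ∈ Finset.range n, (β + (k + 1) * α) / (1 + β + k * α))
      atTop (nhds 0) ∧
    ∀ᵐ ω ∂μ, (∑' k : ℕ, u k ω * ∏ s ∈ Finset.range k, (1 - u s ω)) = 1 := by
  have ha : (0:ℝ) < 1 - α := by linarith
  have hbk : ∀ k : ℕ, (0:ℝ) < β + (k + 1) * α := by
    intro k
    nlinarith [mul_nonneg (Nat.cast_nonneg (α := ℝ) k) hα]
  -- per-factor expectation
  have hfac : ∀ k : ℕ, ∫ ω, (1 - u k ω) ∂μ = (β + (k + 1) * α) / (1 + β + k * α) := by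
    intro k
    have h1 : ∫ ω, (1 - u k ω) ∂μ = ∫ x, (1 - x) ∂(μ.map (u k)) := by
      rw [integral_map (hmeas k).aemeasurable
        (Continuous.aestronglyMeasurable (by continuity))]
    rw [h1, hlaw k, betaMeasure_exp_one_sub ha (hbk k)]
    congr 1
    ring
  -- part 1
  have hg_meas : ∀ k : ℕ, Measurable (fun ω => 1 - u k ω) := fun k =>
    measurable_const.sub (hmeas k)
  have hg_indep : iIndepFun (fun k => fun ω => 1 - u k ω) μ :=
    hindep.comp (fun _ x => 1 - x) (fun _ => measurable_const.sub measurable_id)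
  have part1 : ∀ n : ℕ, ∫ ω, ∏ k ∈ Finset.range n, (1 - u k ω) ∂μ =
      ∏ k ∈ Finset.range n, (β + (k + 1) * α) / (1 + β + k * α) := by
    intro n
    induction n with
    | zero => simp
    | succ n ih =>
      have hXfun : (∏ j ∈ Finset.range n, fun ω => 1 - u j ω)
          = fun ω => ∏ j ∈ Finset.range n, (1 - u j ω) := by
        funext ω
        simp
      have hXmeas : AEStronglyMeasurable (∏ j ∈ Finset.range n, fun ω => 1 - u j ω) μ := by
        rw [hXfun]
        exact (Finset.measurable_prod (Finset.range n)
          (fun k _ => hg_meas k)).aestronglyMeasurable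
      have hkey := (hg_indep.indepFun_prod_range_succ hg_meas n).integral_mul_eq_mul_integral hXmeas
        (hg_meas n).aestronglyMeasurable
      rw [hXfun] at hkey
      calc ∫ ω, ∏ k ∈ Finset.range (n + 1), (1 - u k ω) ∂μ
          = integral μ ((fun ω => ∏ j ∈ Finset.range n, (1 - u j ω)) * fun ω => 1 - u n ω) := by
            congr 1
            funext ω
            simp [Finset.prod_range_succ]
        _ = (∫ ω, ∏ j ∈ Finset.range n, (1 - u j ω) ∂μ) * ∫ ω, (1 - u n ω) ∂μ := hkey
        _ = _ := by rw [ih, hfac n, Finset.prod_range_succ]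
  refine ⟨part1, prod_tendsto_zero hα hα1 hβ, ?_⟩
  -- part 3
  have hgood : ∀ᵐ ω ∂μ, ∀ k : ℕ, u k ω ∈ Set.Ioo (0:ℝ) 1 := by
    rw [ae_all_iff]
    intro k
    have hmap0 : μ.map (u k) (Set.Ioo (0:ℝ) 1)ᶜ = 0 := by
      rw [hlaw k, _root_.betaMeasure, withDensity_apply _ measurableSet_Ioo.compl,
        Measure.restrict_restrict measurableSet_Ioo.compl, Set.compl_inter_self,
        Measure.restrict_empty, lintegral_zero_measure]
    have h2 : ∀ᵐ x ∂(μ.map (u k)), x ∈ Set.Ioo (0:ℝ) 1 := by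
      rw [ae_iff]
      exact hmap0
    exact (ae_map_iff (hmeas k).aemeasurable measurableSet_Ioo).mp h2
  -- lintegral argument
  set Q : ℕ → Ω → ℝ≥0∞ := fun n ω => ENNReal.ofReal (∏ k ∈ Finset.range n, (1 - u k ω))
    with hQ
  have hQmeas : ∀ n, Measurable (Q n) := fun n =>
    (Finset.measurable_prod (Finset.range n) (fun k _ => hg_meas k)).ennreal_ofReal
  have hQanti : ∀ n, Q (n + 1) ≤ᵐ[μ] Q n := by
    intro n
    filter_upwards [hgood] with ω hω
    apply ENNReal.ofReal_le_ofReal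
    rw [Finset.prod_range_succ]
    have hp : 0 ≤ ∏ k ∈ Finset.range n, (1 - u k ω) :=
      Finset.prod_nonneg (fun k _ => by linarith [(hω k).2])
    nlinarith [(hω n).1, (hω n).2, hp]
  have hQint : ∀ n, ∫⁻ ω, Q n ω ∂μ
      = ENNReal.ofReal (∏ k ∈ Finset.range n, (β + (k + 1) * α) / (1 + β + k * α)) := by
    intro n
    rw [← part1 n]
    rw [← ofReal_integral_eq_lintegral_ofReal]
    · -- integrability
      apply Integrable.mono' (integrable_const (1:ℝ))
      · exact (Finset.measurable_prod (Finset.range n)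
          (fun k _ => hg_meas k)).aestronglyMeasurable
      · filter_upwards [hgood] with ω hω
        rw [Real.norm_eq_abs, abs_of_nonneg
          (Finset.prod_nonneg (fun k _ => by linarith [(hω k).2]))]
        calc ∏ k ∈ Finset.range n, (1 - u k ω) ≤ ∏ k ∈ Finset.range n, 1 :=
              Finset.prod_le_prod (fun k _ => by linarith [(hω k).2])
                (fun k _ => by linarith [(hω k).1])
          _ = 1 := Finset.prod_const_one
    · filter_upwards [hgood] with ω hω
      exact Finset.prod_nonneg (fun k _ => by linarith [(hω k).2])
  have hQ0 : ∫⁻ ω, Q 0 ω ∂μ ≠ ⊤ := by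
    simp [hQ]
  have hiInf : ∫⁻ ω, ⨅ n, Q n ω ∂μ = ⨅ n, ∫⁻ ω, Q n ω ∂μ :=
    lintegral_iInf_ae hQmeas hQanti hQ0
  -- the infimum of integrals is zero
  have hpanti : Antitone (fun n : ℕ =>
      ENNReal.ofReal (∏ k ∈ Finset.range n, (β + (k + 1) * α) / (1 + β + k * α))) := by
    apply antitone_nat_of_succ_le
    intro n
    apply ENNReal.ofReal_le_ofReal
    rw [Finset.prod_range_succ]
    have hb1 : 0 < 1 + β := by linarith
    have hnum := hbk n
    have hden : (0:ℝ) < 1 + β + n * α :=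
      add_pos_of_pos_of_nonneg hb1 (mul_nonneg (Nat.cast_nonneg n) hα)
    have hr1 : (β + (n + 1) * α) / (1 + β + n * α) ≤ 1 := by
      rw [div_le_one hden]; linarith
    have hp : 0 ≤ ∏ k ∈ Finset.range n, (β + (k + 1) * α) / (1 + β + k * α) := by
      apply Finset.prod_nonneg
      intro k _
      have : (0:ℝ) < 1 + β + k * α :=
        add_pos_of_pos_of_nonneg hb1 (mul_nonneg (Nat.cast_nonneg k) hα)
      exact div_nonneg (hbk k).le this.le
    nlinarith [div_nonneg (hbk n).le hden.le]
  have htend0 : Tendsto (fun n : ℕ =>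
      ENNReal.ofReal (∏ k ∈ Finset.range n, (β + (k + 1) * α) / (1 + β + k * α)))
      atTop (nhds 0) := by
    have := ENNReal.tendsto_ofReal (prod_tendsto_zero hα hα1 hβ)
    simpa using this
  have hinf0 : (⨅ n, ∫⁻ ω, Q n ω ∂μ) = 0 := by
    have h1 : (⨅ n, ∫⁻ ω, Q n ω ∂μ) = ⨅ n : ℕ,
        ENNReal.ofReal (∏ k ∈ Finset.range n, (β + (k + 1) * α) / (1 + β + k * α)) := by
      congr 1
      ext n
      exact hQint n
    rw [h1]
    exact tendsto_nhds_unique (tendsto_atTop_iInf hpanti) htend0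
  have hae0 : ∀ᵐ ω ∂μ, (⨅ n, Q n ω) = 0 := by
    have h := (lintegral_eq_zero_iff (Measurable.iInf hQmeas)).mp (by rw [hiInf]; exact hinf0)
    filter_upwards [h] with ω hω
    simpa using hω
  -- conclude
  filter_upwards [hgood, hae0] with ω hω hinf
  have hfpos : ∀ k : ℕ, 0 < 1 - u k ω := fun k => by linarith [(hω k).2]
  have hPpos : ∀ n : ℕ, 0 ≤ ∏ k ∈ Finset.range n, (1 - u k ω) :=
    fun n => Finset.prod_nonneg (fun k _ => (hfpos k).le)
  have hQanti' : Antitone (fun n => Q n ω) := by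
    apply antitone_nat_of_succ_le
    intro n
    apply ENNReal.ofReal_le_ofReal
    rw [Finset.prod_range_succ]
    nlinarith [(hω n).1, (hω n).2, hPpos n]
  have hQtend : Tendsto (fun n => Q n ω) atTop (nhds 0) := by
    rw [← hinf]
    exact tendsto_atTop_iInf hQanti'
  have hPtend : Tendsto (fun n => ∏ k ∈ Finset.range n, (1 - u k ω)) atTop (nhds 0) := by
    have h1 : Tendsto (fun n => (Q n ω).toReal) atTop (nhds 0) := by
      have := (ENNReal.tendsto_toReal (by simp : (0:ℝ≥0∞) ≠ ⊤)).comp hQtend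
      exact this
    apply h1.congr
    intro n
    exact ENNReal.toReal_ofReal (hPpos n)
  have hpartial : ∀ n : ℕ, ∑ k ∈ Finset.range n, u k ω * ∏ s ∈ Finset.range k, (1 - u s ω)
      = 1 - ∏ k ∈ Finset.range n, (1 - u k ω) := by
    intro n
    induction n with
    | zero => simp
    | succ n ih => rw [Finset.sum_range_succ, ih, Finset.prod_range_succ]; ring
  have hsumtend : Tendsto (fun n : ℕ => ∑ k ∈ Finset.range n,
      u k ω * ∏ s ∈ Finset.range k, (1 - u s ω)) atTop (nhds 1) := by
    have := (tendsto_const_nhds (x := (1:ℝ)) (f := atTop (α := ℕ))).sub hPtend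
    simp only [sub_zero] at this
    apply this.congr
    intro n
    exact (hpartial n).symm
  have hterm : ∀ k : ℕ, 0 ≤ u k ω * ∏ s ∈ Finset.range k, (1 - u s ω) :=
    fun k => mul_nonneg (hω k).1.le (hPpos k)
  exact ((hasSum_iff_tendsto_nat_of_nonneg hterm 1).mpr hsumtend).tsum_eq
end

section
/- Let u ∼ Beta(a,b) with a,b > 0 and define p_i = i·E[u(1−u)^{i−1}]/(1 − E[(1−u)^i]) for i ≥ 1. Then p_1 = 1 and 0 < p_i ≤ 1 for all i ≥ 1. -/
open Real MeasureTheory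

/-- The probability that the i-th draw from a GDP(a,b,G₀) starts a new cluster,
expressed via Beta(a,b) moments. -/
noncomputable def gdpNewClusterProbMoment (a b : ℝ) (i : ℕ) : ℝ :=
  (i : ℝ) * (∫ x in Set.Ioo (0:ℝ) 1, (x * (1 - x) ^ (i - 1)) * betaDensity a b x) /
    (1 - ∫ x in Set.Ioo (0:ℝ) 1, (1 - x) ^ i * betaDensity a b x)

lemma beta_cpow_eq (a b : ℝ) {x : ℝ} (hx : 0 ≤ x) (hx1 : x ≤ 1) :
    (x:ℂ) ^ ((a:ℂ) - 1) * (1 - (x:ℂ)) ^ ((b:ℂ) - 1)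
      = ((x ^ (a-1) * (1-x) ^ (b-1) : ℝ) : ℂ) := by
  rw [show ((a:ℂ) - 1) = ((a-1 : ℝ) : ℂ) by push_cast; ring,
      show ((b:ℂ) - 1) = ((b-1 : ℝ) : ℂ) by push_cast; ring,
      show (1 - (x:ℂ)) = ((1-x : ℝ) : ℂ) by push_cast; ring,
      ← Complex.ofReal_cpow hx, ← Complex.ofReal_cpow (by linarith), Complex.ofReal_mul]

lemma beta_integrableOn {a b : ℝ} (ha : 0 < a) (hb : 0 < b) :
    IntegrableOn (fun x : ℝ => x ^ (a-1) * (1-x) ^ (b-1)) (Set.Ioo 0 1) := by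
  have h := Complex.betaIntegral_convergent (u := a) (v := b) (by simpa using ha)
    (by simpa using hb)
  have h2 : IntegrableOn (fun x : ℝ => (x:ℂ) ^ ((a:ℂ) - 1) * (1 - (x:ℂ)) ^ ((b:ℂ) - 1))
      (Set.Ioo 0 1) := by
    exact ((intervalIntegrable_iff_integrableOn_Ioc_of_le zero_le_one).mp h).mono_set
      Set.Ioo_subset_Ioc_self
  have h3 := h2.re
  refine (IntegrableOn.congr_fun h3 ?_ measurableSet_Ioo)
  intro x hx
  simp only [Function.comp]
  rw [beta_cpow_eq a b hx.1.le hx.2.le]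
  exact Complex.ofReal_re _

lemma beta_integral_eval {a b : ℝ} (ha : 0 < a) (hb : 0 < b) :
    ∫ x in Set.Ioo (0:ℝ) 1, x ^ (a-1) * (1-x) ^ (b-1)
      = Real.Gamma a * Real.Gamma b / Real.Gamma (a + b) := by
  have hB := Complex.Gamma_mul_Gamma_eq_betaIntegral (s := a) (t := b)
    (by simpa using ha) (by simpa using hb)
  have hbeta : Complex.betaIntegral a b
      = ((∫ x in Set.Ioo (0:ℝ) 1, x ^ (a-1) * (1-x) ^ (b-1) : ℝ) : ℂ) := by
    rw [Complex.betaIntegral, intervalIntegral.integral_of_le zero_le_one]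
    rw [show (∫ x in Set.Ioc (0:ℝ) 1, (x:ℂ) ^ ((a:ℂ) - 1) * (1 - (x:ℂ)) ^ ((b:ℂ) - 1))
        = ∫ x in Set.Ioc (0:ℝ) 1, ((x ^ (a-1) * (1-x) ^ (b-1) : ℝ) : ℂ) from
      setIntegral_congr_fun measurableSet_Ioc fun x hx => beta_cpow_eq a b hx.1.le hx.2]
    have hcast : (∫ x in Set.Ioc (0:ℝ) 1, ((x ^ (a-1) * (1-x) ^ (b-1) : ℝ) : ℂ))
        = ((∫ x in Set.Ioc (0:ℝ) 1, x ^ (a-1) * (1-x) ^ (b-1) : ℝ) : ℂ) := integral_ofReal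
    rw [hcast, integral_Ioc_eq_integral_Ioo]
  rw [hbeta] at hB
  have hG : Complex.Gamma ((a:ℂ) + (b:ℂ)) = ((Real.Gamma (a+b) : ℝ) : ℂ) := by
    rw [show ((a:ℂ) + (b:ℂ)) = ((a+b : ℝ) : ℂ) by push_cast; ring, Complex.Gamma_ofReal]
  rw [hG, Complex.Gamma_ofReal, Complex.Gamma_ofReal] at hB
  have hreal : Real.Gamma a * Real.Gamma b
      = Real.Gamma (a+b) * ∫ x in Set.Ioo (0:ℝ) 1, x ^ (a-1) * (1-x) ^ (b-1) := by
    exact_mod_cast hB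
  have hGpos : 0 < Real.Gamma (a+b) := Real.Gamma_pos_of_pos (by linarith)
  field_simp
  linarith [hreal]

lemma pow_geom_ineq {y : ℝ} (h0 : 0 ≤ y) (h1 : y ≤ 1) {i : ℕ} (hi : 1 ≤ i) :
    (i:ℝ) * ((1 - y) * y ^ (i-1)) ≤ 1 - y ^ i := by
  have hsum : 1 - y ^ i = (1 - y) * ∑ j ∈ Finset.range i, y ^ j := by
    have := geom_sum_mul y i
    linarith [this]
  have hle : (i:ℝ) * y ^ (i-1) ≤ ∑ j ∈ Finset.range i, y ^ j := by
    calc (i:ℝ) * y ^ (i-1) = ∑ _j ∈ Finset.range i, y ^ (i-1) := by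
          simp [Finset.sum_const, mul_comm]
      _ ≤ ∑ j ∈ Finset.range i, y ^ j := by
          refine Finset.sum_le_sum fun j hj => ?_
          exact pow_le_pow_of_le_one h0 h1 (by have := Finset.mem_range.mp hj; omega)
  calc (i:ℝ) * ((1 - y) * y ^ (i-1)) = (1 - y) * ((i:ℝ) * y ^ (i-1)) := by ring
    _ ≤ (1 - y) * ∑ j ∈ Finset.range i, y ^ j :=
        mul_le_mul_of_nonneg_left hle (by linarith)
    _ = 1 - y ^ i := hsum.symm

theorem gdp_new_cluster_prob_bounds (a b : ℝ) (ha : 0 < a) (hb : 0 < b) :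
    gdpNewClusterProbMoment a b 1 = 1 ∧
      ∀ i : ℕ, 1 ≤ i → 0 < gdpNewClusterProbMoment a b i ∧ gdpNewClusterProbMoment a b i ≤ 1 := by
  set B := Real.Gamma a * Real.Gamma b / Real.Gamma (a + b) with hBdef
  have hBpos : 0 < B := div_pos (mul_pos (Real.Gamma_pos_of_pos ha) (Real.Gamma_pos_of_pos hb))
    (Real.Gamma_pos_of_pos (by linarith))
  have hf_int : IntegrableOn (betaDensity a b) (Set.Ioo 0 1) := by
    exact (beta_integrableOn ha hb).div_const B
  have hf_total : ∫ x in Set.Ioo (0:ℝ) 1, betaDensity a b x = 1 := by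
    unfold betaDensity
    rw [integral_div, beta_integral_eval ha hb, ← hBdef, div_self hBpos.ne']
  have hf_pos : ∀ x ∈ Set.Ioo (0:ℝ) 1, 0 < betaDensity a b x := by
    intro x hx
    exact div_pos (mul_pos (Real.rpow_pos_of_pos hx.1 _)
      (Real.rpow_pos_of_pos (by linarith [hx.2]) _)) hBpos
  have hf_meas : AEStronglyMeasurable (betaDensity a b)
      (volume.restrict (Set.Ioo (0:ℝ) 1)) := hf_int.aestronglyMeasurable
  -- Integrability of the two moment integrands, for any i ≥ 1
  have hsub : ∀ (g : ℝ → ℝ), Measurable g → (∀ x ∈ Set.Ioo (0:ℝ) 1, |g x| ≤ 1) →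
      IntegrableOn (fun x => g x * betaDensity a b x) (Set.Ioo 0 1) := by
    intro g hg hgle
    refine Integrable.mono' hf_int (hg.aestronglyMeasurable.mul hf_meas) ?_
    rw [ae_restrict_iff' measurableSet_Ioo]
    filter_upwards with x hx
    have hfx := (hf_pos x hx).le
    rw [norm_mul, Real.norm_eq_abs, Real.norm_eq_abs, abs_of_nonneg hfx]
    calc |g x| * betaDensity a b x ≤ 1 * betaDensity a b x :=
          mul_le_mul_of_nonneg_right (hgle x hx) hfx
      _ = betaDensity a b x := one_mul _

  -- key moment facts
  have key : ∀ i : ℕ, 1 ≤ i →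
      (0 < ∫ x in Set.Ioo (0:ℝ) 1, (x * (1 - x) ^ (i - 1)) * betaDensity a b x) ∧
      ((i:ℝ) * ∫ x in Set.Ioo (0:ℝ) 1, (x * (1 - x) ^ (i - 1)) * betaDensity a b x)
        ≤ 1 - ∫ x in Set.Ioo (0:ℝ) 1, (1 - x) ^ i * betaDensity a b x := by
    intro i hi
    have hφmeas : Measurable fun x : ℝ => x * (1 - x) ^ (i - 1) :=
      measurable_id.mul ((measurable_const.sub measurable_id).pow_const _)
    have hψmeas : Measurable fun x : ℝ => (1 - x) ^ i :=
      (measurable_const.sub measurable_id).pow_const _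
    have hφbd : ∀ x ∈ Set.Ioo (0:ℝ) 1, |x * (1 - x) ^ (i - 1)| ≤ 1 := by
      intro x hx
      have h1 : (0:ℝ) ≤ 1 - x := by linarith [hx.2]
      have h2 : (0:ℝ) ≤ x * (1 - x) ^ (i - 1) := mul_nonneg hx.1.le (pow_nonneg h1 _)
      rw [abs_of_nonneg h2]
      exact mul_le_one₀ hx.2.le (pow_nonneg h1 _) (pow_le_one₀ h1 (by linarith [hx.1]))
    have hψbd : ∀ x ∈ Set.Ioo (0:ℝ) 1, |(1 - x) ^ i| ≤ 1 := by
      intro x hx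
      have h1 : (0:ℝ) ≤ 1 - x := by linarith [hx.2]
      rw [abs_of_nonneg (pow_nonneg h1 _)]
      exact pow_le_one₀ h1 (by linarith [hx.1])
    have hNint := hsub _ hφmeas hφbd
    have hDint := hsub _ hψmeas hψbd
    have hNpos : 0 < ∫ x in Set.Ioo (0:ℝ) 1, (x * (1 - x) ^ (i - 1)) * betaDensity a b x := by
      rw [setIntegral_pos_iff_support_of_nonneg_ae ?_ hNint]
      · refine lt_of_lt_of_le (b := volume (Set.Ioo (0:ℝ) 1)) ?_ (measure_mono ?_)
        · show (0:ENNReal) < volume (Set.Ioo (0:ℝ) 1)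
          rw [Real.volume_Ioo]
          norm_num
        · intro x hx
          refine ⟨?_, hx⟩
          have h1 : (0:ℝ) < 1 - x := by linarith [hx.2]
          exact (mul_pos (mul_pos hx.1 (pow_pos h1 _)) (hf_pos x hx)).ne'
      · filter_upwards [ae_restrict_mem measurableSet_Ioo] with x hx
        have h1 : (0:ℝ) ≤ 1 - x := by linarith [hx.2]
        exact mul_nonneg (mul_nonneg hx.1.le (pow_nonneg h1 _)) (hf_pos x hx).le
    refine ⟨hNpos, ?_⟩
    have hrw : 1 - (∫ x in Set.Ioo (0:ℝ) 1, (1 - x) ^ i * betaDensity a b x)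
        = ∫ x in Set.Ioo (0:ℝ) 1,
            (betaDensity a b x - (1 - x) ^ i * betaDensity a b x) := by
      rw [integral_sub hf_int hDint, hf_total]
    rw [hrw, ← integral_const_mul]
    refine setIntegral_mono_on (hNint.const_mul _) (hf_int.sub hDint) measurableSet_Ioo ?_
    intro x hx
    have h0 : (0:ℝ) ≤ 1 - x := by linarith [hx.2]
    have h1 : 1 - x ≤ 1 := by linarith [hx.1]
    have hg := pow_geom_ineq h0 h1 hi
    rw [show (1 : ℝ) - (1 - x) = x by ring] at hg
    have hfx := (hf_pos x hx).le
    have := mul_le_mul_of_nonneg_right hg hfx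
    calc (i:ℝ) * ((x * (1 - x) ^ (i - 1)) * betaDensity a b x)
        = ((i:ℝ) * (x * (1 - x) ^ (i - 1))) * betaDensity a b x := by ring
      _ ≤ (1 - (1 - x) ^ i) * betaDensity a b x := this
      _ = betaDensity a b x - (1 - x) ^ i * betaDensity a b x := by ring
  constructor
  · -- i = 1
    obtain ⟨hN1, -⟩ := key 1 le_rfl
    have hD1 : (1 - ∫ x in Set.Ioo (0:ℝ) 1, (1 - x) ^ 1 * betaDensity a b x)
        = ∫ x in Set.Ioo (0:ℝ) 1, (x * (1 - x) ^ (1 - 1)) * betaDensity a b x := by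
      have hψmeas : Measurable fun x : ℝ => (1 - x) ^ 1 :=
        (measurable_const.sub measurable_id).pow_const _
      have hψbd : ∀ x ∈ Set.Ioo (0:ℝ) 1, |(1 - x) ^ 1| ≤ 1 := by
        intro x hx
        rw [pow_one, abs_of_nonneg (by linarith [hx.2])]
        linarith [hx.1]
      have hDint := hsub _ hψmeas hψbd
      nth_rewrite 1 [← hf_total]
      rw [← integral_sub hf_int hDint]
      refine setIntegral_congr_fun measurableSet_Ioo fun x _ => ?_
      simp; ring
    rw [gdpNewClusterProbMoment, hD1, Nat.cast_one, one_mul, div_self hN1.ne']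
  · intro i hi
    obtain ⟨hN, hK⟩ := key i hi
    have hiN : 0 < (i:ℝ) * ∫ x in Set.Ioo (0:ℝ) 1, (x * (1 - x) ^ (i - 1)) * betaDensity a b x :=
      mul_pos (by exact_mod_cast hi) hN
    have hD : 0 < 1 - ∫ x in Set.Ioo (0:ℝ) 1, (1 - x) ^ i * betaDensity a b x :=
      lt_of_lt_of_le hiN hK
    exact ⟨div_pos hiN hD, (div_le_one hD).mpr hK⟩
end
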